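/- Let G be a simple connected graph on n ≥ 2 vertices. Then μ₁(G) ≥ d₁(G) + 1, where μ₁(G) is the largest eigenvalue of the Laplacian L(G) and d₁(G) is the maximum degree of G, with equality if and only if G has a vertex of degree n − 1. -/

import Mathlib

open Matrix Finset

/-- The signless Laplacian matrix `Q(G) = D + A` of a simple graph, over `ℝ`. -/
def sLapMatrix {m : ℕ} (G : SimpleGraph (Fin m)) [DecidableRel G.Adj] :
    Matrix (Fin m) (Fin m) ℝ :=
  G.degMatrix ℝ + G.adjMatrix ℝ

/-- `q` lists the eigenvalues of `A` (with multiplicity) in non-increasing order. -/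
def IsEigSeq {m : ℕ} (A : Matrix (Fin m) (Fin m) ℝ) (q : Fin m → ℝ) : Prop :=
  Antitone q ∧ ∃ (hA : A.IsHermitian) (σ : Equiv.Perm (Fin m)),
    ∀ i, q i = hA.eigenvalues (σ i)

/-- `d` lists the degrees of `G` (with multiplicity) in non-increasing order. -/
def IsDegSeq {m : ℕ} (G : SimpleGraph (Fin m)) [DecidableRel G.Adj] (d : Fin m → ℕ) : Prop :=
  Antitone d ∧ ∃ σ : Equiv.Perm (Fin m), ∀ i, d i = G.degree (σ i)

lemma rayleigh_upper {m : ℕ} (A : Matrix (Fin m) (Fin m) ℝ) (hA : A.IsHermitian) (μ : ℝ)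
    (h : ∀ i, hA.eigenvalues i ≤ μ) (x : Fin m → ℝ) :
    x ⬝ᵥ (A *ᵥ x) ≤ μ * (x ⬝ᵥ x) := by
  set V : Matrix (Fin m) (Fin m) ℝ := (hA.eigenvectorUnitary : Matrix (Fin m) (Fin m) ℝ) with hV
  have hVU : V * star V = 1 := (Matrix.mem_unitaryGroup_iff).mp hA.eigenvectorUnitary.2
  have hkey : μ • (1 : Matrix (Fin m) (Fin m) ℝ) - A
      = V * diagonal (fun i => μ - hA.eigenvalues i) * Vᴴ := by
    have hst := hA.spectral_theorem
    rw [RCLike.ofReal_real_eq_id] at hst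
    simp only [Unitary.conjStarAlgAut_apply, Unitary.coe_star] at hst
    have h1 : μ • (1 : Matrix (Fin m) (Fin m) ℝ) = V * (μ • 1) * star V := by
      rw [Matrix.mul_smul, Matrix.smul_mul, mul_one, hVU]
    rw [← Matrix.star_eq_conjTranspose V, h1]
    nth_rewrite 1 [hst]
    rw [← Matrix.sub_mul, ← Matrix.mul_sub]
    congr 2
    rw [← diagonal_one, ← diagonal_smul, diagonal_sub]
    congr 1
    funext i
    simp
  have hPSD : (μ • (1 : Matrix (Fin m) (Fin m) ℝ) - A).PosSemidef := by
    rw [hkey]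
    exact (Matrix.posSemidef_diagonal_iff.mpr fun i => by linarith [h i]).mul_mul_conjTranspose_same V
  have h2 := hPSD.dotProduct_mulVec_nonneg x
  rw [star_trivial, sub_mulVec, smul_mulVec, one_mulVec, dotProduct_sub,
    dotProduct_smul] at h2
  simp only [smul_eq_mul] at h2
  linarith

lemma sum_sq_sub {m : ℕ} (y : Fin m → ℝ) :
    ∑ i, ∑ j, (y i - y j)^2 = 2*m*(∑ i, (y i)^2) - 2*(∑ i, y i)^2 := by
  have h : ∀ i, ∑ j, (y i - y j)^2
      = (m:ℝ) * (y i)^2 - (2 * ∑ j, y j) * (y i) + ∑ j, (y j)^2 := by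
    intro i
    have e : ∀ j, (y i - y j)^2 = (y i)^2 - (2 * y j) * y i + (y j)^2 := fun j => by ring
    simp_rw [e, Finset.sum_add_distrib, Finset.sum_sub_distrib, ← Finset.sum_mul,
      Finset.sum_const, card_univ, Fintype.card_fin, nsmul_eq_mul]
    ring_nf
    rw [← Finset.sum_mul]
    ring
  simp_rw [h, Finset.sum_add_distrib, Finset.sum_sub_distrib, ← Finset.mul_sum,
    Finset.sum_const, card_univ, Fintype.card_fin, nsmul_eq_mul]
  ring

lemma lap_eig_le {m : ℕ} (G : SimpleGraph (Fin m)) [DecidableRel G.Adj]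
    (hA : (G.lapMatrix ℝ).IsHermitian) (i : Fin m) : hA.eigenvalues i ≤ m := by
  set y : Fin m → ℝ := ⇑(hA.eigenvectorBasis i) with hy
  have hy0 : y ≠ 0 := fun h =>
    (hA.eigenvectorBasis.orthonormal.ne_zero i) (by ext j; exact congrFun h j)
  have hyy : 0 < y ⬝ᵥ y :=
    lt_of_le_of_ne (Finset.sum_nonneg fun j _ => mul_self_nonneg _)
      (fun h => hy0 (dotProduct_self_eq_zero.mp h.symm))
  have hev := hA.mulVec_eigenvectorBasis i
  have h1 : y ⬝ᵥ (G.lapMatrix ℝ *ᵥ y) = hA.eigenvalues i * (y ⬝ᵥ y) := by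
    rw [show G.lapMatrix ℝ *ᵥ y = hA.eigenvalues i • y from hev, dotProduct_smul, smul_eq_mul]
  have h2 : y ⬝ᵥ (G.lapMatrix ℝ *ᵥ y) =
      (∑ a, ∑ b, if G.Adj a b then (y a - y b)^2 else 0) / 2 := by
    rw [← Matrix.toLinearMap₂'_apply', SimpleGraph.lapMatrix_toLinearMap₂']
  have h3 : (∑ a, ∑ b, if G.Adj a b then (y a - y b)^2 else 0) ≤ ∑ a, ∑ b, (y a - y b)^2 :=
    Finset.sum_le_sum fun a _ => Finset.sum_le_sum fun b _ => by
      by_cases hab : G.Adj a b <;> simp [hab, sq_nonneg]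
  have h4 := sum_sq_sub y
  have h5 : y ⬝ᵥ y = ∑ j, (y j)^2 := by simp [dotProduct, sq]
  have h6 : hA.eigenvalues i * (y ⬝ᵥ y) ≤ (m:ℝ) * (y ⬝ᵥ y) := by
    rw [← h1, h2, h5]
    nlinarith [sq_nonneg (∑ j, y j)]
  exact (mul_le_mul_iff_of_pos_right hyy).mp h6

section main
variable {n : ℕ}

def delVert {m : ℕ} (G : SimpleGraph (Fin m)) (v : Fin m) : SimpleGraph (Fin m) where
  Adj a b := G.Adj a b ∧ a ≠ v ∧ b ≠ v
  symm := ⟨fun a b (hab : G.Adj a b ∧ a ≠ v ∧ b ≠ v) => ⟨hab.1.symm, hab.2.2, hab.2.1⟩⟩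
  loopless := ⟨fun a (ha : G.Adj a a ∧ a ≠ v ∧ a ≠ v) => G.loopless.irrefl a ha.1⟩

instance {m : ℕ} (G : SimpleGraph (Fin m)) [DecidableRel G.Adj] (v : Fin m) :
    DecidableRel (delVert G v).Adj :=
  fun a b => inferInstanceAs (Decidable (G.Adj a b ∧ a ≠ v ∧ b ≠ v))

lemma sum_ite_adj {m : ℕ} (G : SimpleGraph (Fin m)) [DecidableRel G.Adj] (v : Fin m) (c : ℝ) :
    ∑ b, (if G.Adj v b then c else 0) = (G.degree v : ℝ) * c := by
  rw [SimpleGraph.degree_eq_sum_if_adj, Finset.sum_mul]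
  exact Finset.sum_congr rfl fun b _ => by split <;> simp

section main
variable {n : ℕ} (hn : 2 ≤ n) (G : SimpleGraph (Fin n)) [DecidableRel G.Adj]

-- test vector computations
lemma test_comp (v : Fin n)
    (x : Fin n → ℝ) (hx : x = fun w => if w = v then (G.degree v : ℝ) else if G.Adj v w then -1 else 0) :
    x ⬝ᵥ x = (G.degree v : ℝ) * ((G.degree v : ℝ) + 1) ∧
    (∑ a, ∑ b, if G.Adj a b then (x a - x b)^2 else 0)
      = 2 * (G.degree v : ℝ) * ((G.degree v : ℝ) + 1)^2
        + (∑ a, ∑ b, if (delVert G v).Adj a b then (x a - x b)^2 else 0) := by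
  set Δ : ℝ := (G.degree v : ℝ) with hΔ
  have hxv : x v = Δ := by rw [hx]; simp
  have hxadj : ∀ w, G.Adj v w → x w = -1 := by
    intro w hw
    rw [hx]; simp only []
    rw [if_neg (fun h => G.irrefl (h ▸ hw)), if_pos hw]
  constructor
  · have e : ∀ w, x w * x w = (if w = v then Δ * Δ else 0) + (if G.Adj v w then 1 else 0) := by
      intro w
      by_cases h : w = v
      · subst h; rw [hxv, if_pos rfl, if_neg (G.irrefl), add_zero]
      · rw [if_neg h]
        by_cases ha : G.Adj v w
        · rw [hxadj w ha, if_pos ha]; norm_num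
        · rw [hx]; simp [h, ha]
    rw [dotProduct]
    simp_rw [e]
    rw [Finset.sum_add_distrib, Finset.sum_ite_eq' Finset.univ v, if_pos (Finset.mem_univ v),
      sum_ite_adj G v 1]
    ring
  · have e : ∀ a b, (if G.Adj a b then (x a - x b)^2 else 0)
        = (if a = v then (if G.Adj v b then (Δ+1)^2 else 0) else 0)
          + (if b = v then (if G.Adj a v then (Δ+1)^2 else 0) else 0)
          + (if (delVert G v).Adj a b then (x a - x b)^2 else 0) := by
      intro a b
      by_cases hav : a = v
      · subst hav
        by_cases hbv : b = a
        · subst hbv; simp [G.irrefl, delVert]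
        · rw [if_neg hbv, if_pos rfl, add_zero,
            if_neg (fun h : (delVert G a).Adj a b => h.2.1 rfl), add_zero]
          by_cases hadj : G.Adj a b
          · rw [if_pos hadj, if_pos hadj, hxv, hxadj b hadj]; ring_nf
          · rw [if_neg hadj, if_neg hadj]
      · by_cases hbv : b = v
        · subst hbv
          rw [if_neg hav, zero_add, if_pos rfl,
            if_neg (fun h : (delVert G b).Adj a b => h.2.2 rfl), add_zero]
          by_cases hadj : G.Adj a b
          · rw [if_pos hadj, if_pos hadj, hxv, hxadj a hadj.symm]; ring_nf
          · rw [if_neg hadj, if_neg hadj]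
        · rw [if_neg hav, if_neg hbv, zero_add, zero_add]
          by_cases hadj : G.Adj a b
          · rw [if_pos hadj, if_pos (show (delVert G v).Adj a b from ⟨hadj, hav, hbv⟩)]
          · rw [if_neg hadj, if_neg (fun h : (delVert G v).Adj a b => hadj h.1)]
    simp_rw [e, Finset.sum_add_distrib]
    have e1 : ∀ a : Fin n, (∑ b, if a = v then (if G.Adj v b then (Δ+1)^2 else 0) else 0)
        = (if a = v then (∑ b, if G.Adj v b then (Δ+1)^2 else 0) else 0) := by
      intro a; split <;> simp
    conv_lhs => enter [1, 1, 2, a]; rw [e1 a]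
    rw [Finset.sum_ite_eq' Finset.univ v, if_pos (Finset.mem_univ v), sum_ite_adj G v]
    have : ∀ a : Fin n, (∑ b, if b = v then (if G.Adj a v then (Δ+1)^2 else 0) else 0)
        = (if G.Adj v a then (Δ+1)^2 else 0) := by
      intro a
      rw [Finset.sum_ite_eq' Finset.univ v, if_pos (Finset.mem_univ v)]
      congr 1
      exact propext (SimpleGraph.adj_comm G a v)
    conv_lhs => enter [1, 2, 2, a]; rw [this a]
    rw [sum_ite_adj G v]
    ring

lemma all_adj_of_walk {m : ℕ} {G : SimpleGraph (Fin m)} :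
    ∀ {a v : Fin m}, G.Walk a v →
      (∀ a b, G.Adj a b → b ≠ v → G.Adj v b → a ≠ v → G.Adj v a) →
      (a = v ∨ G.Adj v a) := by
  intro a v p
  induction p with
  | nil => exact fun _ => Or.inl rfl
  | @cons a b c h q ih =>
    intro hcross
    rcases ih hcross with hbv | hvb
    · exact Or.inr (hbv ▸ h).symm
    · by_cases hav : a = c
      · exact Or.inl hav
      · exact Or.inr (hcross a b h (G.ne_of_adj hvb).symm hvb hav)


end main
end main

theorem mu_one_ge_d_one_add_one {n : ℕ} (hn : 2 ≤ n)
    (G : SimpleGraph (Fin n)) [DecidableRel G.Adj] (hG : G.Connected)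
    (mu : Fin n → ℝ) (hmu : IsEigSeq (G.lapMatrix ℝ) mu)
    (d : Fin n → ℕ) (hd : IsDegSeq G d) :
    mu ⟨0, by omega⟩ ≥ (d ⟨0, by omega⟩ : ℝ) + 1 ∧
    (mu ⟨0, by omega⟩ = (d ⟨0, by omega⟩ : ℝ) + 1 ↔ ∃ v, G.degree v = n - 1) := by
  obtain ⟨hmuA, hA, σ, hσ⟩ := hmu
  obtain ⟨hdA, τ, hτ⟩ := hd
  set i0 : Fin n := ⟨0, by omega⟩ with hi0
  have hle0 : ∀ j : Fin n, i0 ≤ j := fun j => by rw [Fin.le_def]; exact Nat.zero_le _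
  set v : Fin n := τ i0 with hv
  set Δ : ℕ := G.degree v with hΔdef
  have hd0 : d i0 = Δ := hτ i0
  have hmax : ∀ w, G.degree w ≤ Δ := by
    intro w
    have h1 := hdA (hle0 (τ.symm w))
    rwa [hτ (τ.symm w), Equiv.apply_symm_apply, hd0] at h1
  have hmu0max : ∀ j, hA.eigenvalues j ≤ mu i0 := by
    intro j
    have h1 := hmuA (hle0 (σ.symm j))
    rwa [hσ (σ.symm j), Equiv.apply_symm_apply] at h1
  -- Δ ≥ 1
  have hΔ1 : 1 ≤ Δ := by
    obtain ⟨w, hw⟩ := Fintype.exists_ne_of_one_lt_card (by rw [Fintype.card_fin]; omega) v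
    obtain ⟨p⟩ := hG.preconnected v w
    have hΔpos : 0 < G.degree v := by
      rw [G.degree_pos_iff_exists_adj]
      cases p with
      | nil => exact absurd rfl hw
      | cons h q => exact ⟨_, h⟩
    omega
  -- test vector
  set x : Fin n → ℝ := fun w => if w = v then (Δ : ℝ) else if G.Adj v w then -1 else 0 with hxdef
  obtain ⟨hxx, hQsplit⟩ := test_comp G v x hxdef
  have hQform : x ⬝ᵥ (G.lapMatrix ℝ *ᵥ x) =
      (∑ a, ∑ b, if G.Adj a b then (x a - x b)^2 else 0) / 2 := by
    rw [← Matrix.toLinearMap₂'_apply', SimpleGraph.lapMatrix_toLinearMap₂']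
  set Q2 : ℝ := ∑ a, ∑ b, if (delVert G v).Adj a b then (x a - x b)^2 else 0 with hQ2
  have hQ2nonneg : 0 ≤ Q2 :=
    Finset.sum_nonneg fun a _ => Finset.sum_nonneg fun b _ => by split <;> [exact sq_nonneg _; rfl]
  have hray := rayleigh_upper _ hA (mu i0) hmu0max x
  rw [hQform, hQsplit, hxx, ← hΔdef] at hray
  have hΔR : (1:ℝ) ≤ (Δ:ℝ) := by exact_mod_cast hΔ1
  have hpos : (0:ℝ) < (Δ:ℝ) * ((Δ:ℝ)+1) := by nlinarith
  have key1 : (Δ:ℝ) + 1 ≤ mu i0 := by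
    have h7 : ((Δ:ℝ)+1) * ((Δ:ℝ) * ((Δ:ℝ)+1)) ≤ mu i0 * ((Δ:ℝ) * ((Δ:ℝ)+1)) := by
      nlinarith [hray, hQ2nonneg]
    exact (mul_le_mul_iff_of_pos_right hpos).mp h7
  have hcastd : ((d i0 : ℕ) : ℝ) = (Δ : ℝ) := by rw [hd0]
  refine ⟨by rw [hcastd]; exact key1, ?_, ?_⟩
  · -- equality → exists vertex of degree n-1
    intro heq
    rw [hcastd] at heq
    have hQ2zero : Q2 = 0 := by nlinarith [hray, hQ2nonneg]
    have hconst : ∀ a b, (delVert G v).Adj a b → x a = x b := by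
      have hform : Matrix.toLinearMap₂' ℝ ((delVert G v).lapMatrix ℝ) x x = 0 := by
        rw [SimpleGraph.lapMatrix_toLinearMap₂', ← hQ2, hQ2zero]
        norm_num
      exact (SimpleGraph.lapMatrix_toLinearMap₂'_apply'_eq_zero_iff_forall_adj
        ℝ (delVert G v) x).mp hform
    have hcross : ∀ a b, G.Adj a b → b ≠ v → G.Adj v b → a ≠ v → G.Adj v a := by
      intro a b hab hbnv hvb hav
      by_contra hadj
      have := hconst a b ⟨hab, hav, hbnv⟩
      have hxa : x a = 0 := by rw [hxdef]; simp [hav, hadj]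
      have hxb : x b = -1 := by
        rw [hxdef]; simp only []
        rw [if_neg hbnv, if_pos hvb]
      rw [hxa, hxb] at this
      norm_num at this
    have hall : ∀ w, w = v ∨ G.Adj v w := by
      intro w
      obtain ⟨p⟩ := hG.preconnected w v
      exact all_adj_of_walk p hcross
    refine ⟨v, ?_⟩
    have : G.neighborFinset v = Finset.univ.erase v := by
      ext w
      simp only [SimpleGraph.mem_neighborFinset, Finset.mem_erase, Finset.mem_univ, and_true]
      constructor
      · exact fun h => (G.ne_of_adj h.symm)
      · intro h
        rcases hall w with h' | h'
        · exact absurd h' h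
        · exact h'
    rw [← SimpleGraph.card_neighborFinset_eq_degree, this, Finset.card_erase_of_mem
      (Finset.mem_univ v), Finset.card_univ, Fintype.card_fin]
  · -- exists vertex of degree n-1 → equality
    rintro ⟨v₀, hv₀⟩
    have hΔeq : Δ = n - 1 := by
      have h1 : G.degree v < n := by
        have := G.degree_lt_card_verts v; rwa [Fintype.card_fin] at this
      have h2 := hmax v₀
      omega
    have hmun : mu i0 ≤ (n : ℝ) := by
      rw [hσ i0]
      exact lap_eig_le G hA (σ i0)
    have hcast : (Δ : ℝ) + 1 = (n : ℝ) := by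
      rw [hΔeq]
      have : ((n - 1 : ℕ) : ℝ) = (n : ℝ) - 1 := by
        rw [Nat.cast_sub (by omega)]; norm_num
      rw [this]; ring
    rw [hcastd]
    linarith [key1, hmun, hcast]
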